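/- For every integer s ≥ 0, the space (ℙ_s)³ of ℝ³-valued polynomial vector fields of degree ≤ s decomposes as the direct sum of curl((ℙ_{s+1})³) and x·ℙ_{s-1} := {x ↦ p(x)·x : p ∈ ℙ_{s-1}}, where ℙ_{-1} = {0}. -/

import Mathlib

open MvPolynomial

noncomputable section

abbrev P3 := MvPolynomial (Fin 3) ℝ

/-- `ℙ_n`, polynomials of total degree ≤ n, with `ℙ_n = {0}` for `n < 0`. -/
def Pdeg3 (n : ℤ) : Submodule ℝ P3 :=
  if n < 0 then ⊥ else restrictTotalDegree (Fin 3) ℝ n.toNat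

/-- `(ℙ_n)³`. -/
def Ps3vec (n : ℤ) : Submodule ℝ (Fin 3 → P3) :=
  Submodule.pi Set.univ (fun _ => Pdeg3 n)

def pd3 (i : Fin 3) : P3 →ₗ[ℝ] P3 := (pderiv i : Derivation ℝ P3 P3).toLinearMap

def pr3 (i : Fin 3) : (Fin 3 → P3) →ₗ[ℝ] P3 := LinearMap.proj i

/-- The curl operator on polynomial vector fields, as a linear map. -/
def curlLM : (Fin 3 → P3) →ₗ[ℝ] (Fin 3 → P3) :=
  LinearMap.pi ![pd3 1 ∘ₗ pr3 2 - pd3 2 ∘ₗ pr3 1,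
                 pd3 2 ∘ₗ pr3 0 - pd3 0 ∘ₗ pr3 2,
                 pd3 0 ∘ₗ pr3 1 - pd3 1 ∘ₗ pr3 0]

/-- `p ↦ (x ↦ p(x)·x)` as a linear map. -/
def xMulLM : P3 →ₗ[ℝ] (Fin 3 → P3) :=
  LinearMap.pi (fun i => LinearMap.mulLeft ℝ (X i))


open Finsupp in
lemma coeff_pderiv (i : Fin 3) (f : P3) (β : Fin 3 →₀ ℕ) :
    MvPolynomial.coeff β (pderiv i f) = (β i + 1 : ℝ) * MvPolynomial.coeff (β + Finsupp.single i 1) f := by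
  induction f using MvPolynomial.induction_on' with
  | add p q hp hq => simp [hp, hq, mul_add]
  | monomial u a =>
    rw [pderiv_monomial]
    rcases Nat.eq_zero_or_pos (u i) with h | h
    · have hne : u ≠ β + Finsupp.single i 1 := by
        intro he; rw [he] at h; simp at h
      simp [MvPolynomial.coeff_monomial, h, hne]
    · have key : (u - Finsupp.single i 1 = β) ↔ (u = β + Finsupp.single i 1) := by
        constructor
        · intro he
          ext j
          by_cases hj : j = i
          · subst hj
            have := congrArg (fun g => g j + 1) he
            simp [Finsupp.single_apply] at this ⊢
            omega
          · have := congrArg (fun g => g j) he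
            simp [Finsupp.single_apply, Ne.symm hj] at this ⊢
            omega
        · intro he; subst he; ext j; by_cases hj : j = i <;>
            simp [Finsupp.single_apply, hj]
      rw [MvPolynomial.coeff_monomial, MvPolynomial.coeff_monomial]
      by_cases hc : u = β + Finsupp.single i 1
      · rw [if_pos (key.mpr hc), if_pos hc]
        have : u i = β i + 1 := by rw [hc]; simp
        rw [this]; push_cast; ring
      · rw [if_neg (fun h => hc (key.mp h)), if_neg hc]; simp
/-- degree of a monomial exponent -/
def degS (β : Fin 3 →₀ ℕ) : ℕ := β.sum fun _ n => n

lemma degS_add (β γ : Fin 3 →₀ ℕ) : degS (β + γ) = degS β + degS γ := by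
  simp [degS, Finsupp.sum_add_index']

lemma degS_single (i : Fin 3) : degS (Finsupp.single i 1) = 1 := by
  simp [degS, Finsupp.sum_single_index]

/-- Euler operator `∑ xᵢ ∂ᵢ`. -/
def EO : P3 →ₗ[ℝ] P3 := ∑ i : Fin 3, (LinearMap.mulLeft ℝ (X i)) ∘ₗ pd3 i

lemma EO_apply (f : P3) : EO f = X 0 * pderiv 0 f + X 1 * pderiv 1 f + X 2 * pderiv 2 f := by
  simp [EO, Fin.sum_univ_three, pd3]

lemma coeff_X_mul_pderiv (i : Fin 3) (f : P3) (β : Fin 3 →₀ ℕ) :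
    MvPolynomial.coeff β (X i * pderiv i f) = (β i : ℝ) * MvPolynomial.coeff β f := by
  rw [MvPolynomial.coeff_X_mul']
  by_cases h : i ∈ β.support
  · rw [if_pos h, coeff_pderiv]
    have hb : 0 < β i := Nat.pos_of_ne_zero (Finsupp.mem_support_iff.mp h)
    have h1 : β - Finsupp.single i 1 + Finsupp.single i 1 = β := by
      ext j
      by_cases hj : j = i
      · subst hj; simp [Finsupp.tsub_apply]; omega
      · simp [Finsupp.tsub_apply, Finsupp.single_apply, Ne.symm hj]
    have h2 : ((β - Finsupp.single i 1 : Fin 3 →₀ ℕ)) i = β i - 1 := by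
      simp [Finsupp.tsub_apply]
    rw [h1, h2]
    have : ((β i - 1 : ℕ) : ℝ) + 1 = (β i : ℝ) := by
      have h3 : (β i - 1) + 1 = β i := Nat.succ_pred_eq_of_pos hb
      exact_mod_cast congrArg (Nat.cast (R := ℝ)) h3
    rw [this]
  · rw [if_neg h]
    have : β i = 0 := Finsupp.notMem_support_iff.mp h
    rw [this]; simp

lemma coeff_EO (f : P3) (β : Fin 3 →₀ ℕ) :
    MvPolynomial.coeff β (EO f) = (degS β : ℝ) * MvPolynomial.coeff β f := by
  rw [EO_apply]
  simp only [MvPolynomial.coeff_add, coeff_X_mul_pderiv]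
  have : degS β = β 0 + β 1 + β 2 := by
    rw [degS, Finsupp.sum_fintype _ _ (fun _ => rfl), Fin.sum_univ_three]
  rw [this]; push_cast; ring

/-- inverse of `EO + c` -/
def invE (c : ℕ) (p : P3) : P3 :=
  ∑ β ∈ p.support, MvPolynomial.monomial β (((degS β : ℝ) + c)⁻¹ * MvPolynomial.coeff β p)

lemma coeff_invE (c : ℕ) (p : P3) (β : Fin 3 →₀ ℕ) :
    MvPolynomial.coeff β (invE c p) = ((degS β : ℝ) + c)⁻¹ * MvPolynomial.coeff β p := by
  rw [invE, MvPolynomial.coeff_sum]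
  by_cases h : β ∈ p.support
  · rw [Finset.sum_eq_single β (fun b _ hb => by rw [MvPolynomial.coeff_monomial, if_neg hb])
      (fun hb => absurd h hb)]
    simp [MvPolynomial.coeff_monomial]
  · rw [Finset.sum_eq_zero fun b hb => by
      rw [MvPolynomial.coeff_monomial, if_neg (fun (he : b = β) => h (he ▸ hb))]]
    rw [MvPolynomial.notMem_support_iff.mp h, mul_zero]

lemma EO_invE (c : ℕ) (hc : 0 < c) (p : P3) :
    EO (invE c p) + c • invE c p = p := by
  apply MvPolynomial.ext; intro β
  rw [MvPolynomial.coeff_add, coeff_EO, MvPolynomial.coeff_smul, coeff_invE, nsmul_eq_mul]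
  have hne : (degS β : ℝ) + c ≠ 0 := by positivity
  field_simp

lemma EO_cancel (c : ℕ) (hc : 0 < c) {f g : P3}
    (h : EO f + c • f = EO g + c • g) : f = g := by
  apply MvPolynomial.ext; intro β
  have := congrArg (MvPolynomial.coeff β) h
  rw [MvPolynomial.coeff_add, MvPolynomial.coeff_add, coeff_EO, coeff_EO,
    MvPolynomial.coeff_smul, MvPolynomial.coeff_smul, nsmul_eq_mul, nsmul_eq_mul] at this
  have hne : (degS β : ℝ) + c ≠ 0 := by positivity
  have h2 : ((degS β : ℝ) + c) * MvPolynomial.coeff β f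
      = ((degS β : ℝ) + c) * MvPolynomial.coeff β g := by ring_nf; ring_nf at this; linarith
  exact mul_left_cancel₀ hne h2
lemma EO_pderiv (j : Fin 3) (f : P3) :
    EO (pderiv j f) = pderiv j (EO f) - pderiv j f := by
  apply MvPolynomial.ext; intro β
  rw [MvPolynomial.coeff_sub, coeff_EO, coeff_pderiv, coeff_pderiv, coeff_EO,
    degS_add, degS_single]
  push_cast
  ring

lemma EO_X_mul (i : Fin 3) (f : P3) : EO (X i * f) = X i * EO f + X i * f := by
  rw [EO_apply, EO_apply]
  fin_cases i <;>
    simp [pderiv_mul, pderiv_X, Pi.single_apply] <;> ring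

lemma my_pderiv_comm (i j : Fin 3) (f : P3) :
    pderiv i (pderiv j f) = pderiv j (pderiv i f) := by
  apply MvPolynomial.ext; intro β
  rw [coeff_pderiv, coeff_pderiv, coeff_pderiv, coeff_pderiv]
  by_cases h : i = j
  · subst h; ring_nf
  · have h1 : ((β + Finsupp.single i 1 : Fin 3 →₀ ℕ)) j = β j := by
      simp [Finsupp.single_apply, h]
    have h2 : ((β + Finsupp.single j 1 : Fin 3 →₀ ℕ)) i = β i := by
      simp [Finsupp.single_apply, Ne.symm h]
    rw [h1, h2, add_right_comm]
    ring

lemma totalDegree_pderiv_le (i : Fin 3) (f : P3) (n : ℕ) (hf : f.totalDegree ≤ n + 1) :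
    (pderiv i f).totalDegree ≤ n := by
  rw [MvPolynomial.totalDegree]
  apply Finset.sup_le
  intro β hβ
  have hc : MvPolynomial.coeff β (pderiv i f) ≠ 0 := MvPolynomial.mem_support_iff.mp hβ
  rw [coeff_pderiv] at hc
  have hc2 : MvPolynomial.coeff (β + Finsupp.single i 1) f ≠ 0 := by
    intro h; rw [h, mul_zero] at hc; exact hc rfl
  have := MvPolynomial.le_totalDegree (MvPolynomial.mem_support_iff.mpr hc2)
  have hd : (β + Finsupp.single i 1).sum (fun _ e => e) = degS β + 1 := by
    show degS (β + Finsupp.single i 1) = _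
    rw [degS_add, degS_single]
  have : degS β + 1 ≤ n + 1 := by
    calc degS β + 1 = (β + Finsupp.single i 1).sum (fun _ e => e) := hd.symm
    _ ≤ f.totalDegree := this
    _ ≤ n + 1 := hf
  have hfin : (β.sum fun _ e => e) = degS β := rfl
  omega

lemma pderiv_eq_zero_of_deg0 (i : Fin 3) (f : P3) (hf : f.totalDegree ≤ 0) :
    pderiv i f = 0 := by
  apply MvPolynomial.ext; intro β
  rw [coeff_pderiv, MvPolynomial.coeff_zero]
  have : MvPolynomial.coeff (β + Finsupp.single i 1) f = 0 := by
    apply MvPolynomial.coeff_eq_zero_of_totalDegree_lt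
    have hd : (β + Finsupp.single i 1).sum (fun _ e => e) = degS β + 1 := by
      show degS (β + Finsupp.single i 1) = _
      rw [degS_add, degS_single]
    have h2 : ∑ j ∈ (β + Finsupp.single i 1).support,
        ((β + Finsupp.single i 1 : Fin 3 →₀ ℕ)) j
        = (β + Finsupp.single i 1).sum (fun _ e => e) := rfl
    omega
  rw [this, mul_zero]

lemma totalDegree_invE_le (c : ℕ) (p : P3) : (invE c p).totalDegree ≤ p.totalDegree := by
  rw [MvPolynomial.totalDegree]
  apply Finset.sup_le
  intro β hβ
  have hc : MvPolynomial.coeff β (invE c p) ≠ 0 := MvPolynomial.mem_support_iff.mp hβ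
  rw [coeff_invE] at hc
  have : MvPolynomial.coeff β p ≠ 0 := by
    intro h; rw [h, mul_zero] at hc; exact hc rfl
  exact MvPolynomial.le_totalDegree (MvPolynomial.mem_support_iff.mpr this)

lemma totalDegree_X_mul_le (i : Fin 3) (f : P3) (n : ℕ) (hf : f.totalDegree ≤ n) :
    (X i * f : P3).totalDegree ≤ n + 1 := by
  calc (X i * f : P3).totalDegree ≤ (X i : P3).totalDegree + f.totalDegree :=
        MvPolynomial.totalDegree_mul _ _
  _ ≤ 1 + n := by rw [MvPolynomial.totalDegree_X]; omega
  _ = n + 1 := by omega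
lemma EO_invE' (c : ℕ) (hc : 0 < c) (p : P3) : EO (invE c p) = p - c • invE c p :=
  eq_sub_of_add_eq (EO_invE c hc p)

lemma comp0 (u0 u1 u2 : P3) :
    pderiv 1 (-invE 1 (X 0 * u1 - X 1 * u0)) - pderiv 2 (-invE 1 (X 2 * u0 - X 0 * u2))
      + X 0 * invE 3 (pderiv 0 u0 + pderiv 1 u1 + pderiv 2 u2) = u0 := by
  apply EO_cancel 2 (by norm_num)
  simp only [map_neg, map_sub, map_add, EO_pderiv, EO_X_mul,
    EO_invE' 1 one_pos, EO_invE' 3 (by norm_num)]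
  simp only [map_sub, map_add, map_neg, map_smul, map_nsmul, pderiv_mul, pderiv_X,
    Pi.single_apply]
  rw [EO_apply u0]
  simp only [Fin.isValue, if_true, if_false]
  ring_nf
  norm_num [Fin.ext_iff]
lemma comp1 (u0 u1 u2 : P3) :
    pderiv 2 (-invE 1 (X 1 * u2 - X 2 * u1)) - pderiv 0 (-invE 1 (X 0 * u1 - X 1 * u0))
      + X 1 * invE 3 (pderiv 0 u0 + pderiv 1 u1 + pderiv 2 u2) = u1 := by
  apply EO_cancel 2 (by norm_num)
  simp only [map_neg, map_sub, map_add, EO_pderiv, EO_X_mul,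
    EO_invE' 1 one_pos, EO_invE' 3 (by norm_num)]
  simp only [map_sub, map_add, map_neg, map_smul, map_nsmul, pderiv_mul, pderiv_X,
    Pi.single_apply]
  rw [EO_apply u1]
  simp only [Fin.isValue, if_true, if_false]
  ring_nf
  norm_num [Fin.ext_iff]

lemma comp2 (u0 u1 u2 : P3) :
    pderiv 0 (-invE 1 (X 2 * u0 - X 0 * u2)) - pderiv 1 (-invE 1 (X 1 * u2 - X 2 * u1))
      + X 2 * invE 3 (pderiv 0 u0 + pderiv 1 u1 + pderiv 2 u2) = u2 := by
  apply EO_cancel 2 (by norm_num)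
  simp only [map_neg, map_sub, map_add, EO_pderiv, EO_X_mul,
    EO_invE' 1 one_pos, EO_invE' 3 (by norm_num)]
  simp only [map_sub, map_add, map_neg, map_smul, map_nsmul, pderiv_mul, pderiv_X,
    Pi.single_apply]
  rw [EO_apply u2]
  simp only [Fin.isValue, if_true, if_false]
  ring_nf
  norm_num [Fin.ext_iff]

lemma curl_apply (v : Fin 3 → P3) :
    curlLM v = ![pderiv 1 (v 2) - pderiv 2 (v 1),
                 pderiv 2 (v 0) - pderiv 0 (v 2),
                 pderiv 0 (v 1) - pderiv 1 (v 0)] := by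
  funext i
  fin_cases i <;> simp [curlLM, pd3, pr3]

lemma xMul_apply (p : P3) (i : Fin 3) : xMulLM p i = X i * p := by
  simp [xMulLM]
lemma totalDegree_neg3 (f : P3) : (-f : P3).totalDegree = f.totalDegree := by
  rw [MvPolynomial.totalDegree, MvPolynomial.totalDegree, MvPolynomial.support_neg]

lemma totalDegree_sub_le3 (f g : P3) (n : ℕ) (hf : f.totalDegree ≤ n) (hg : g.totalDegree ≤ n) :
    (f - g : P3).totalDegree ≤ n := by
  rw [sub_eq_add_neg]
  exact le_trans (MvPolynomial.totalDegree_add _ _) (by rw [totalDegree_neg3]; omega)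

lemma totalDegree_add_le3 (f g : P3) (n : ℕ) (hf : f.totalDegree ≤ n) (hg : g.totalDegree ≤ n) :
    (f + g : P3).totalDegree ≤ n :=
  le_trans (MvPolynomial.totalDegree_add _ _) (by omega)

lemma invE_zero (c : ℕ) : invE c 0 = 0 := by simp [invE]

lemma mem_Pdeg3_nat (n : ℕ) (f : P3) : f ∈ Pdeg3 (n : ℤ) ↔ f.totalDegree ≤ n := by
  rw [Pdeg3, if_neg (by omega), mem_restrictTotalDegree]
  norm_num

lemma divergence_eq (y : Fin 3 → P3) (p : P3) (h : xMulLM p = y) :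
    pderiv 0 (y 0) + pderiv 1 (y 1) + pderiv 2 (y 2) = EO p + 3 • p := by
  subst h
  simp only [xMul_apply, pderiv_mul, pderiv_X, Pi.single_apply, EO_apply]
  norm_num [Fin.ext_iff]
  ring

lemma divergence_curl (v : Fin 3 → P3) :
    pderiv 0 (curlLM v 0) + pderiv 1 (curlLM v 1) + pderiv 2 (curlLM v 2) = 0 := by
  rw [curl_apply]
  show pderiv 0 (pderiv 1 (v 2) - pderiv 2 (v 1)) + pderiv 1 (pderiv 2 (v 0) - pderiv 0 (v 2))
    + pderiv 2 (pderiv 0 (v 1) - pderiv 1 (v 0)) = 0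
  simp only [map_sub]
  rw [my_pderiv_comm 0 1 (v 2), my_pderiv_comm 0 2 (v 1), my_pderiv_comm 1 2 (v 0)]
  ring

lemma mem_Ps3vec (n : ℤ) (u : Fin 3 → P3) : u ∈ Ps3vec n ↔ ∀ i, u i ∈ Pdeg3 n := by
  rw [Ps3vec, Submodule.mem_pi]
  simp
/-- `(ℙ_s)³ = curl((ℙ_{s+1})³) ⊕ x·ℙ_{s-1}` (internal direct sum). -/
theorem stmt4 (s : ℕ) :
    (Submodule.map curlLM (Ps3vec (s + 1))) ⊓ (Submodule.map xMulLM (Pdeg3 (s - 1))) = ⊥ ∧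
    (Submodule.map curlLM (Ps3vec (s + 1))) ⊔ (Submodule.map xMulLM (Pdeg3 (s - 1))) =
      Ps3vec s := by
  have hcast1 : ((s : ℤ) + 1) = ((s + 1 : ℕ) : ℤ) := by push_cast; ring
  constructor
  · -- intersection is trivial
    rw [eq_bot_iff]
    rintro y ⟨⟨v, _, hcv⟩, ⟨p, _, hxp⟩⟩
    have hdiv : EO p + 3 • p = 0 := by
      rw [← divergence_eq y p hxp, ← hcv, divergence_curl]
    have hp0 : p = 0 := EO_cancel 3 (by norm_num)
      (by rw [hdiv]; simp)
    simp only [Submodule.mem_bot]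
    rw [← hxp, hp0, map_zero]
  · apply le_antisymm
    · apply sup_le
      · -- curl of Ps3vec (s+1) lands in Ps3vec s
        rintro y ⟨v, hv, rfl⟩
        rw [mem_Ps3vec]
        intro i
        have hvd : ∀ j, (v j).totalDegree ≤ s + 1 := by
          intro j
          have := (mem_Ps3vec _ v).mp hv j
          rwa [hcast1, mem_Pdeg3_nat] at this
        rw [mem_Pdeg3_nat]
        have key : ∀ a b c d : Fin 3,
            (pderiv a (v b) - pderiv c (v d) : P3).totalDegree ≤ s := by
          intro a b c d
          exact totalDegree_sub_le3 _ _ s (totalDegree_pderiv_le _ _ _ (hvd b))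
            (totalDegree_pderiv_le _ _ _ (hvd d))
        rw [curl_apply]
        fin_cases i
        · exact key 1 2 2 1
        · exact key 2 0 0 2
        · exact key 0 1 1 0
      · -- x · Pdeg3 (s-1) lands in Ps3vec s
        rintro y ⟨p, hp, rfl⟩
        rw [mem_Ps3vec]
        intro i
        rw [mem_Pdeg3_nat]
        rcases s with _ | t
        · have : p = 0 := by
            have h0 : ((0 : ℕ) : ℤ) - 1 < 0 := by norm_num
            rw [Pdeg3, if_pos h0] at hp
            simpa using hp
          rw [xMul_apply, this, mul_zero]
          simp
        · have hcast2 : ((t + 1 : ℕ) : ℤ) - 1 = ((t : ℕ) : ℤ) := by push_cast; ring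
          rw [hcast2, SetLike.mem_coe, mem_Pdeg3_nat] at hp
          rw [xMul_apply]
          exact totalDegree_X_mul_le i p t hp
    · -- Ps3vec s ≤ sup
      intro u hu
      have hud : ∀ j, (u j).totalDegree ≤ s := by
        intro j
        have := (mem_Ps3vec _ u).mp hu j
        rwa [mem_Pdeg3_nat] at this
      set d : P3 := pderiv 0 (u 0) + pderiv 1 (u 1) + pderiv 2 (u 2) with hd
      set p : P3 := invE 3 d with hpdef
      set v : Fin 3 → P3 := ![-invE 1 (X 1 * u 2 - X 2 * u 1),
                              -invE 1 (X 2 * u 0 - X 0 * u 2),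
                              -invE 1 (X 0 * u 1 - X 1 * u 0)] with hvdef
      have hvmem : v ∈ Ps3vec ((s : ℤ) + 1) := by
        rw [mem_Ps3vec]
        intro i
        rw [hcast1, mem_Pdeg3_nat]
        have key : ∀ a b c e : Fin 3,
            (-invE 1 (X a * u b - X c * u e) : P3).totalDegree ≤ s + 1 := by
          intro a b c e
          rw [totalDegree_neg3]
          refine le_trans (totalDegree_invE_le _ _) ?_
          exact totalDegree_sub_le3 _ _ (s+1) (totalDegree_X_mul_le _ _ _ (hud b))
            (totalDegree_X_mul_le _ _ _ (hud e))
        fin_cases i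
        · exact key 1 2 2 1
        · exact key 2 0 0 2
        · exact key 0 1 1 0
      have hpmem : p ∈ Pdeg3 ((s : ℤ) - 1) := by
        rcases s with _ | t
        · have hz : ∀ j : Fin 3, pderiv j (u j) = 0 := fun j =>
            pderiv_eq_zero_of_deg0 j (u j) (hud j)
          have : p = 0 := by
            rw [hpdef, hd, hz 0, hz 1, hz 2, add_zero, add_zero, invE_zero]
          rw [this]
          exact Submodule.zero_mem _
        · have hcast2 : ((t + 1 : ℕ) : ℤ) - 1 = ((t : ℕ) : ℤ) := by push_cast; ring
          rw [hcast2, mem_Pdeg3_nat]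
          refine le_trans (totalDegree_invE_le _ _) ?_
          refine totalDegree_add_le3 _ _ t (totalDegree_add_le3 _ _ t ?_ ?_) ?_ <;>
            exact totalDegree_pderiv_le _ _ _ (hud _)
      have hequ : curlLM v + xMulLM p = u := by
        funext i
        have h0 : curlLM v = ![pderiv 1 (v 2) - pderiv 2 (v 1),
            pderiv 2 (v 0) - pderiv 0 (v 2), pderiv 0 (v 1) - pderiv 1 (v 0)] := curl_apply v
        fin_cases i
        · show curlLM v 0 + xMulLM p 0 = u 0
          rw [h0, xMul_apply]
          show pderiv 1 (v 2) - pderiv 2 (v 1) + X 0 * p = u 0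
          rw [hvdef]
          show pderiv 1 (-invE 1 (X 0 * u 1 - X 1 * u 0))
            - pderiv 2 (-invE 1 (X 2 * u 0 - X 0 * u 2)) + X 0 * p = u 0
          exact comp0 (u 0) (u 1) (u 2)
        · show curlLM v 1 + xMulLM p 1 = u 1
          rw [h0, xMul_apply]
          show pderiv 2 (v 0) - pderiv 0 (v 2) + X 1 * p = u 1
          rw [hvdef]
          show pderiv 2 (-invE 1 (X 1 * u 2 - X 2 * u 1))
            - pderiv 0 (-invE 1 (X 0 * u 1 - X 1 * u 0)) + X 1 * p = u 1
          exact comp1 (u 0) (u 1) (u 2)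
        · show curlLM v 2 + xMulLM p 2 = u 2
          rw [h0, xMul_apply]
          show pderiv 0 (v 1) - pderiv 1 (v 0) + X 2 * p = u 2
          rw [hvdef]
          show pderiv 0 (-invE 1 (X 2 * u 0 - X 0 * u 2))
            - pderiv 1 (-invE 1 (X 1 * u 2 - X 2 * u 1)) + X 2 * p = u 2
          exact comp2 (u 0) (u 1) (u 2)
      exact Submodule.mem_sup.mpr ⟨curlLM v, Submodule.mem_map_of_mem hvmem,
        xMulLM p, Submodule.mem_map_of_mem hpmem, hequ⟩
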